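/- Let g ∈ GL₄(ℂ) satisfy g*Jg = λ·J for some λ ∈ ℝ_{>0}, and write g in 2×2 blocks as g = [[A, B],[C, E]]. Let Z ∈ M₂(ℂ) be such that (1/(2i))(Z − Z*) is positive definite. Then C·Z + E is invertible, and the matrix W = (A·Z + B)·(C·Z + E)⁻¹ again satisfies that (1/(2i))(W − W*) is positive definite; that is, g⟨Z⟩ := (AZ + B)(CZ + E)⁻¹ maps the hermitian upper half-space ℋ₂ into itself. -/

import Mathlib

open scoped ComplexOrder
open Matrix

noncomputable section

/-- The matrix `J = [[0, −1₂], [1₂, 0]]` in 2×2 block form. -/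
def J4 : Matrix (Fin 2 ⊕ Fin 2) (Fin 2 ⊕ Fin 2) ℂ :=
  Matrix.fromBlocks 0 (-1) 1 0

lemma posDef_conj_aux {n : Type*} [Fintype n] [DecidableEq n]
    {P N : Matrix n n ℂ} (hP : P.PosDef) (hN : IsUnit N) : (Nᴴ * P * N).PosDef := by
  refine posDef_iff_dotProduct_mulVec.mpr ⟨isHermitian_conjTranspose_mul_mul N hP.1, fun x hx => ?_⟩
  have hinj : Function.Injective N.mulVec := mulVec_injective_iff_isUnit.mpr hN
  have hNx : N *ᵥ x ≠ 0 := by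
    intro h
    exact hx (hinj (by simpa using h))
  simpa only [star_mulVec, dotProduct_mulVec, vecMul_vecMul, ← Matrix.mul_assoc] using
    hP.dotProduct_mulVec_pos hNx

lemma posDef_smul_aux {n : Type*} [Fintype n] {P : Matrix n n ℂ} (hP : P.PosDef)
    {l : ℝ} (hl : 0 < l) : ((l : ℂ) • P).PosDef := by
  refine posDef_iff_dotProduct_mulVec.mpr ⟨?_, fun x hx => ?_⟩
  · have := hP.1
    unfold Matrix.IsHermitian at this ⊢
    rw [conjTranspose_smul, this]
    norm_num
  · have h1 := hP.dotProduct_mulVec_pos hx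
    have h2 : (0 : ℂ) < (l : ℂ) := by exact_mod_cast hl
    calc (0 : ℂ) < (l : ℂ) * (star x ⬝ᵥ P *ᵥ x) := mul_pos h2 h1
    _ = star x ⬝ᵥ ((l : ℂ) • P) *ᵥ x := by
        rw [smul_mulVec, dotProduct_smul, smul_eq_mul]

/-- If `g = [[A, B], [C, E]] ∈ GL₄(ℂ)` satisfies `g* J g = λ·J`
with `λ ∈ ℝ_{>0}`, and `Z ∈ ℋ₂` (i.e. `(1/(2i))(Z − Z*)` is positive definite), then
`C·Z + E` is invertible and `W = (A·Z + B)(C·Z + E)⁻¹` again lies in `ℋ₂`. -/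
theorem stmt12 (g : Matrix (Fin 2 ⊕ Fin 2) (Fin 2 ⊕ Fin 2) ℂ)
    (A B C E : Matrix (Fin 2) (Fin 2) ℂ)
    (hblk : g = Matrix.fromBlocks A B C E)
    (l : ℝ) (hl : 0 < l)
    (hg : gᴴ * J4 * g = (l : ℂ) • J4)
    (Z : Matrix (Fin 2) (Fin 2) ℂ)
    (hZ : ((((2 : ℂ) * Complex.I)⁻¹) • (Z - Zᴴ)).PosDef) :
    IsUnit (C * Z + E) ∧
      ((((2 : ℂ) * Complex.I)⁻¹) •
        ((A * Z + B) * (C * Z + E)⁻¹ - ((A * Z + B) * (C * Z + E)⁻¹)ᴴ)).PosDef := by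
  subst hblk
  set M := A * Z + B with hM
  set N := C * Z + E with hN
  -- extract the block relations
  simp only [J4, fromBlocks_conjTranspose, fromBlocks_multiply, fromBlocks_smul] at hg
  obtain ⟨h11, h12, h21, h22⟩ := Matrix.fromBlocks_inj.mp hg
  simp only [Matrix.mul_zero, Matrix.mul_one, Matrix.mul_neg, Matrix.zero_mul, Matrix.one_mul,
    zero_add, add_zero, smul_zero, smul_neg] at h11 h12 h21 h22
  -- the key identity
  have key : Nᴴ * M - Mᴴ * N = (l : ℂ) • (Z - Zᴴ) := by
    have expand : Nᴴ * M - Mᴴ * N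
        = Zᴴ * (Cᴴ * A + -Aᴴ * C) * Z + (Eᴴ * A + -Bᴴ * C) * Z
          + Zᴴ * (Cᴴ * B + -Aᴴ * E) + (Eᴴ * B + -Bᴴ * E) := by
      simp only [hM, hN, conjTranspose_add, conjTranspose_mul]
      noncomm_ring
    rw [expand, h11, h12, h21, h22]
    simp only [Matrix.mul_zero, Matrix.zero_mul, zero_add, add_zero, smul_sub,
      Matrix.smul_mul, Matrix.mul_smul, Matrix.one_mul, Matrix.mul_one, Matrix.mul_neg]
    abel
  -- quadratic form identity
  have quad : ∀ v : Fin 2 → ℂ, star v ⬝ᵥ ((Nᴴ * M - Mᴴ * N) *ᵥ v)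
      = star (N *ᵥ v) ⬝ᵥ (M *ᵥ v) - star (M *ᵥ v) ⬝ᵥ (N *ᵥ v) := by
    intro v
    simp only [Matrix.sub_mulVec, dotProduct_sub, ← Matrix.mulVec_mulVec,
      star_mulVec, dotProduct_mulVec, vecMul_vecMul]
  -- invertibility of N
  have hNunit : IsUnit N := by
    rw [← mulVec_injective_iff_isUnit]
    have ker : ∀ v : Fin 2 → ℂ, N *ᵥ v = 0 → v = 0 := by
      intro v hNv
      by_contra hv
      have h1 := hZ.dotProduct_mulVec_pos hv
      have h2 : star v ⬝ᵥ ((Nᴴ * M - Mᴴ * N) *ᵥ v) = 0 := by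
        rw [quad, hNv]
        simp
      rw [key] at h2
      have h3 : star v ⬝ᵥ ((Z - Zᴴ) *ᵥ v) = 0 := by
        rw [smul_mulVec, dotProduct_smul] at h2
        have hlne : (l : ℂ) ≠ 0 := by exact_mod_cast hl.ne'
        rw [smul_eq_mul, mul_eq_zero] at h2
        exact h2.resolve_left hlne
      rw [smul_mulVec, dotProduct_smul, h3, smul_zero] at h1
      exact lt_irrefl 0 h1
    intro a b hab
    have h := ker (a - b) (by rw [Matrix.mulVec_sub, hab, sub_self])
    exact sub_eq_zero.mp h
  refine ⟨hNunit, ?_⟩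
  have hNdet : IsUnit N.det := (Matrix.isUnit_iff_isUnit_det N).mp hNunit
  have hNN : N * N⁻¹ = 1 := Matrix.mul_nonsing_inv N hNdet
  have hNiunit : IsUnit N⁻¹ := by
    rw [Matrix.isUnit_iff_isUnit_det]
    exact Matrix.isUnit_nonsing_inv_det N hNdet
  -- W - Wᴴ = (N⁻¹)ᴴ (Nᴴ M - Mᴴ N) N⁻¹
  have hW : M * N⁻¹ - (M * N⁻¹)ᴴ = (N⁻¹)ᴴ * (Nᴴ * M - Mᴴ * N) * N⁻¹ := by
    have e1 : (N⁻¹)ᴴ * (Nᴴ * M - Mᴴ * N) * N⁻¹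
        = (N * N⁻¹)ᴴ * (M * N⁻¹) - ((M * N⁻¹)ᴴ * (N * N⁻¹)) := by
      simp only [conjTranspose_mul, Matrix.sub_mul, Matrix.mul_sub]
      noncomm_ring
    rw [e1, hNN]
    simp
  have target_eq : (((2 : ℂ) * Complex.I)⁻¹) • (M * N⁻¹ - (M * N⁻¹)ᴴ)
      = (N⁻¹)ᴴ * ((l : ℂ) • ((((2 : ℂ) * Complex.I)⁻¹) • (Z - Zᴴ))) * N⁻¹ := by
    rw [hW, key]
    rw [smul_comm ((l:ℂ)) ((((2 : ℂ) * Complex.I)⁻¹))]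
    simp only [Matrix.mul_smul, Matrix.smul_mul]
  rw [target_eq]
  exact posDef_conj_aux (posDef_smul_aux hZ hl) hNiunit

end
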